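/- arXiv:1104.4630 — 3 statements merged into one kernel-verified Lean document; each statement's English description precedes it below -/
import Mathlib

section
/- Classical dilogarithm identity of type A₂ (first unsigned form): for all real y₁ > 0 and y₂ > 0, L(y₁/(1+y₁)) + L(y₂(1+y₁)/(1+y₂+y₁y₂)) + L((1+y₂+y₁y₂)/(1+y₁+y₂+y₁y₂)) + L((1+y₂)/(1+y₂+y₁y₂)) + L(1/(1+y₂)) = π²/2. -/
open Real

open MeasureTheory Set Filter intervalIntegral Topology


private lemma glog_intble : IntervalIntegrable (fun y => Real.log y / (1 - y)) volume 0 1 := by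
  rw [intervalIntegrable_iff_integrableOn_Ioc_of_le zero_le_one]
  have hdom : IntegrableOn (fun y : ℝ => 2 + 4 * y ^ (-(1/2) : ℝ)) (Ioc 0 1) volume := by
    have h1 : IntervalIntegrable (fun y : ℝ => y ^ (-(1/2) : ℝ)) volume 0 1 :=
      intervalIntegrable_rpow' (by norm_num)
    rw [intervalIntegrable_iff_integrableOn_Ioc_of_le zero_le_one] at h1
    have h2 : IntervalIntegrable (fun _ : ℝ => (2:ℝ)) volume 0 1 := intervalIntegrable_const
    rw [intervalIntegrable_iff_integrableOn_Ioc_of_le zero_le_one] at h2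
    exact h2.add (h1.const_mul 4)
  refine Integrable.mono hdom ?_ ?_
  · exact (Measurable.aestronglyMeasurable (Real.measurable_log.div (measurable_const.sub measurable_id))).restrict
  · rw [ae_restrict_iff' measurableSet_Ioc]
    refine ae_of_all _ fun y hy => ?_
    obtain ⟨h0, h1⟩ := hy
    have hrpow : (0:ℝ) ≤ y ^ (-(1/2) : ℝ) := Real.rpow_nonneg h0.le _
    have hRHS : ‖2 + 4 * y ^ (-(1/2) : ℝ)‖ = 2 + 4 * y ^ (-(1/2) : ℝ) := by
      rw [Real.norm_eq_abs, abs_of_nonneg]; positivity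
    rw [hRHS]
    rcases eq_or_lt_of_le h1 with rfl | h1
    · simp; positivity
    · have hlog0 : Real.log y ≤ 0 := Real.log_nonpos h0.le h1.le
      have hnorm : ‖Real.log y / (1 - y)‖ = (-Real.log y) / (1 - y) := by
        rw [Real.norm_eq_abs, abs_div, abs_of_nonpos hlog0, abs_of_nonneg (by linarith)]
      rw [hnorm]
      have hsqpos : 0 < Real.sqrt y := Real.sqrt_pos.2 h0
      have hsq : -Real.log y ≤ 2 * y ^ (-(1/2) : ℝ) := by
        have hls := Real.log_le_sub_one_of_pos (show 0 < (Real.sqrt y)⁻¹ by positivity)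
        rw [Real.log_inv, Real.log_sqrt h0.le] at hls
        have hy2 : y ^ (-(1/2) : ℝ) = (Real.sqrt y)⁻¹ := by
          rw [Real.rpow_neg h0.le, Real.sqrt_eq_rpow]
        rw [hy2]; linarith
      rcases le_or_gt y (1/2) with hc | hc
      · have h1y : (1:ℝ)/2 ≤ 1 - y := by linarith
        rw [div_le_iff₀ (by linarith)]
        nlinarith [hsq, mul_nonneg hrpow (show (0:ℝ) ≤ 1 - y by linarith)]
      · have hlin : -Real.log y ≤ 1/y - 1 := by
          have := Real.log_le_sub_one_of_pos (show 0 < y⁻¹ by positivity)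
          rw [Real.log_inv] at this
          simpa [one_div] using this
        have h2 : -Real.log y ≤ 2 * (1 - y) := by
          have : 1/y - 1 = (1-y)/y := by field_simp
          rw [this] at hlin
          calc -Real.log y ≤ (1-y)/y := hlin
            _ ≤ 2 * (1-y) := by rw [div_le_iff₀ h0]; nlinarith
        rw [div_le_iff₀ (by linarith)]
        nlinarith

private lemma glog_intble' : IntervalIntegrable (fun y => Real.log (1 - y) / y) volume 0 1 := by
  have h := (glog_intble.comp_sub_left 1).symm
  norm_num at h
  exact h

private lemma fdilog_intble :
    IntervalIntegrable (fun y => Real.log (1 - y) / y + Real.log y / (1 - y)) volume 0 1 :=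
  glog_intble'.add glog_intble

/-- The Rogers dilogarithm, defined for `0 ≤ x ≤ 1` by
`L(x) = -(1/2) ∫₀ˣ (log(1-y)/y + log(y)/(1-y)) dy`. -/
noncomputable def rogersL (x : ℝ) : ℝ :=
  -(1 / 2) * ∫ y in (0:ℝ)..x, (Real.log (1 - y) / y + Real.log y / (1 - y))


private lemma fdilog_intble_sub {a b : ℝ} (ha : a ∈ Icc (0:ℝ) 1) (hb : b ∈ Icc (0:ℝ) 1) :
    IntervalIntegrable (fun y => Real.log (1 - y) / y + Real.log y / (1 - y)) volume a b := by
  refine fdilog_intble.mono_set ?_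
  exact Set.uIcc_subset_uIcc (by simpa [Set.uIcc_of_le (zero_le_one (α := ℝ))] using ha)
    (by simpa [Set.uIcc_of_le (zero_le_one (α := ℝ))] using hb)

private lemma rogersL_continuousOn : ContinuousOn rogersL (Icc 0 1) := by
  have hint : IntegrableOn (fun y => Real.log (1 - y) / y + Real.log y / (1 - y))
      (uIcc (0:ℝ) 1) volume := by
    rw [Set.uIcc_of_le (zero_le_one (α := ℝ)), integrableOn_Icc_iff_integrableOn_Ioc]
    have h := fdilog_intble
    rwa [intervalIntegrable_iff_integrableOn_Ioc_of_le zero_le_one] at h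
  have h := (continuousOn_primitive_interval hint).const_smul (-(1/2) : ℝ)
  rw [Set.uIcc_of_le (zero_le_one (α := ℝ))] at h
  exact h

private lemma rogersL_zero : rogersL 0 = 0 := by simp [rogersL]

private lemma rogersL_hasDerivAt {x : ℝ} (hx : x ∈ Ioo (0:ℝ) 1) :
    HasDerivAt rogersL (-(1/2) * (Real.log (1 - x) / x + Real.log x / (1 - x))) x := by
  obtain ⟨h0, h1⟩ := hx
  have hcont : ContinuousAt (fun y => Real.log (1 - y) / y + Real.log y / (1 - y)) x := by
    have l1 : ContinuousAt (fun y : ℝ => Real.log (1 - y)) x :=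
      (Real.continuousAt_log (by linarith)).comp (by fun_prop)
    have l2 : ContinuousAt (fun y : ℝ => Real.log y) x := Real.continuousAt_log (by linarith)
    exact (l1.div continuousAt_id h0.ne') |>.add (l2.div (by fun_prop) (by linarith))
  have hmeas : StronglyMeasurableAtFilter
      (fun y => Real.log (1 - y) / y + Real.log y / (1 - y)) (nhds x) volume := by
    refine Measurable.stronglyMeasurable ?_ |>.stronglyMeasurableAtFilter
    exact ((Real.measurable_log.comp (measurable_const.sub measurable_id)).div measurable_id).add
      (Real.measurable_log.div (measurable_const.sub measurable_id))
  have hint : IntervalIntegrable (fun y => Real.log (1 - y) / y + Real.log y / (1 - y))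
      volume 0 x := fdilog_intble_sub (by norm_num) (by constructor <;> linarith)
  have h := (integral_hasDerivAt_right hint hmeas hcont).const_mul (-(1/2) : ℝ)
  exact h

private lemma constOn_unit {G : ℝ → ℝ} (hc : ContinuousOn G (Icc 0 1))
    (hd : ∀ x ∈ Ioo (0:ℝ) 1, HasDerivAt G 0 x) :
    ∀ x ∈ Icc (0:ℝ) 1, G x = G 0 := by
  have key : ∀ a ∈ Ioo (0:ℝ) 1, ∀ b ∈ Ioo (0:ℝ) 1, a ≤ b → G b = G a := by
    intro a ha b hb hab
    refine constant_of_has_deriv_right_zero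
      (hc.mono (Icc_subset_Icc ha.1.le hb.2.le)) (fun y hy => ?_) b (right_mem_Icc.2 hab)
    exact (hd y ⟨lt_of_lt_of_le ha.1 hy.1, lt_of_le_of_lt hy.2.le hb.2⟩).hasDerivWithinAt
  have hmid : (1/2 : ℝ) ∈ Ioo (0:ℝ) 1 := by norm_num
  have haux : ∀ t ∈ Ioo (0:ℝ) 1, G t = G (1/2) := by
    intro t ht
    rcases le_total t (1/2) with h | h
    · exact (key t ht _ hmid h).symm
    · exact key _ hmid t ht h
  have hclo : closure (Ioo (0:ℝ) 1) = Icc 0 1 := closure_Ioo (by norm_num)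
  have hlim : ∀ z ∈ Icc (0:ℝ) 1, G z = G (1/2) := by
    intro z hz
    rcases eq_or_ne z 0 with rfl | hz0
    · have hne : (𝓝[Ioo (0:ℝ) 1] (0:ℝ)).NeBot := by
        rw [← mem_closure_iff_nhdsWithin_neBot, hclo]; exact hz
      have t1 : Tendsto G (𝓝[Ioo (0:ℝ) 1] 0) (𝓝 (G 0)) :=
        (hc 0 hz).mono Ioo_subset_Icc_self
      have t2 : Tendsto G (𝓝[Ioo (0:ℝ) 1] 0) (𝓝 (G (1/2))) := by
        refine tendsto_const_nhds.congr' ?_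
        filter_upwards [eventually_mem_nhdsWithin] with t ht
        exact (haux t ht).symm
      exact tendsto_nhds_unique t1 t2
    rcases eq_or_ne z 1 with rfl | hz1
    · have hne : (𝓝[Ioo (0:ℝ) 1] (1:ℝ)).NeBot := by
        rw [← mem_closure_iff_nhdsWithin_neBot, hclo]; exact hz
      have t1 : Tendsto G (𝓝[Ioo (0:ℝ) 1] 1) (𝓝 (G 1)) :=
        (hc 1 hz).mono Ioo_subset_Icc_self
      have t2 : Tendsto G (𝓝[Ioo (0:ℝ) 1] 1) (𝓝 (G (1/2))) := by
        refine tendsto_const_nhds.congr' ?_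
        filter_upwards [eventually_mem_nhdsWithin] with t ht
        exact (haux t ht).symm
      exact tendsto_nhds_unique t1 t2
    · exact haux z ⟨lt_of_le_of_ne hz.1 (Ne.symm hz0), lt_of_le_of_ne hz.2 hz1⟩
  intro x hx
  rw [hlim x hx, hlim 0 (by norm_num)]

private lemma rogersL_reflect : ∀ y ∈ Icc (0:ℝ) 1, rogersL y + rogersL (1-y) = rogersL 1 := by
  have hc : ContinuousOn (fun y => rogersL y + rogersL (1-y)) (Icc 0 1) := by
    refine (rogersL_continuousOn.mono subset_rfl).add
      (rogersL_continuousOn.comp ((continuous_const.sub continuous_id).continuousOn)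
        fun y hy => ⟨by linarith [hy.2], by linarith [hy.1]⟩)
  have hd : ∀ x ∈ Ioo (0:ℝ) 1, HasDerivAt (fun y => rogersL y + rogersL (1-y)) 0 x := by
    intro x hx
    obtain ⟨h0, h1⟩ := hx
    have hinner : HasDerivAt (fun y : ℝ => 1 - y) (-1) x := by
      simpa using (hasDerivAt_id x).const_sub 1
    have h2 := (rogersL_hasDerivAt (x := 1-x) ⟨by linarith, by linarith⟩).comp x hinner
    have h := (rogersL_hasDerivAt ⟨h0, h1⟩).add h2
    convert h using 1
    rfl
    rfl
    rfl
    rw [show (1:ℝ) - (1-x) = x by ring]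
    ring
  intro y hy
  have := constOn_unit hc hd y hy
  simp only [rogersL_zero, sub_zero, zero_add] at this
  linarith [this]

private lemma basel_shift : HasSum (fun n : ℕ => (1:ℝ) / ((n:ℝ) + 1) ^ 2) (π ^ 2 / 6) := by
  have h := hasSum_zeta_two
  rw [← hasSum_nat_add_iff' 1] at h
  simpa using h

private lemma log_int_value : ∫ y in (0:ℝ)..1, Real.log (1-y) / y = -(π ^ 2 / 6) := by
  have key : ∫ y in Ioc (0:ℝ) 1, Real.log (1-y) / y = -(π ^ 2 / 6) := by
    have hae : ∀ᵐ y ∂(volume.restrict (Ioc (0:ℝ) 1)),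
        Real.log (1-y) / y = -∑' n : ℕ, y ^ n / ((n:ℝ) + 1) := by
      have h1 : ∀ᵐ y ∂(volume.restrict (Ioc (0:ℝ) 1)), y ≠ 1 :=
        ae_restrict_of_ae (by simp [ae_iff, measure_singleton, show {y : ℝ | ¬ y ≠ 1} = {1} from by ext; simp])
      filter_upwards [h1, ae_restrict_mem measurableSet_Ioc] with y hy1 hy
      have hy0 : 0 < y := hy.1
      have hylt : y < 1 := lt_of_le_of_ne hy.2 hy1
      have hsum := hasSum_pow_div_log_of_abs_lt_one
        (x := y) (by rw [abs_of_pos hy0]; exact hylt)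
      have hsum2 := hsum.div_const y
      have heq : (fun n : ℕ => y ^ (n+1) / ((n:ℝ)+1) / y) = fun n : ℕ => y ^ n / ((n:ℝ)+1) := by
        funext n
        rw [pow_succ]
        field_simp
      rw [heq] at hsum2
      rw [hsum2.tsum_eq]
      ring
    rw [integral_congr_ae hae, MeasureTheory.integral_neg]
    congr 1
    have hval : ∀ n : ℕ, ∫ y in Ioc (0:ℝ) 1, y ^ n / ((n:ℝ) + 1) = 1 / ((n:ℝ)+1) ^ 2 := by
      intro n
      rw [← intervalIntegral.integral_of_le zero_le_one, intervalIntegral.integral_div,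
        integral_pow]
      push_cast
      rw [one_pow, zero_pow (by positivity)]
      field_simp
      ring
    rw [integral_tsum]
    · rw [funext hval, basel_shift.tsum_eq]
    · intro n
      exact ((continuous_pow n).div_const _).aestronglyMeasurable.restrict
    · have hnn : ∀ n : ℕ, ∫⁻ y in Ioc (0:ℝ) 1, ‖y ^ n / ((n:ℝ) + 1)‖ₑ ∂volume
          = ENNReal.ofReal (1 / ((n:ℝ)+1) ^ 2) := by
        intro n
        have hcong : ∫⁻ y in Ioc (0:ℝ) 1, ‖y ^ n / ((n:ℝ) + 1)‖ₑ ∂volume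
            = ∫⁻ y in Ioc (0:ℝ) 1, ENNReal.ofReal (y ^ n / ((n:ℝ) + 1)) ∂volume := by
          apply lintegral_congr_ae
          filter_upwards [ae_restrict_mem measurableSet_Ioc] with y hy
          have hy0 : (0:ℝ) ≤ y := hy.1.le
          rw [← Real.enorm_eq_ofReal (by positivity)]
        have hint : IntegrableOn (fun y : ℝ => y ^ n / ((n:ℝ) + 1)) (Ioc 0 1) volume :=
          (((continuous_pow n).div_const _).integrableOn_Icc).mono_set
            Ioc_subset_Icc_self
        have hnn' : 0 ≤ᵐ[volume.restrict (Ioc (0:ℝ) 1)] fun y : ℝ => y ^ n / ((n:ℝ) + 1) := by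
          filter_upwards [ae_restrict_mem measurableSet_Ioc] with y hy
          have hy0 : (0:ℝ) ≤ y := hy.1.le
          positivity
        rw [hcong, ← ofReal_integral_eq_lintegral_ofReal hint hnn', hval n]
      rw [funext hnn, ← ENNReal.ofReal_tsum_of_nonneg (fun n => by positivity)
        basel_shift.summable]
      exact ENNReal.ofReal_ne_top
  rw [intervalIntegral.integral_of_le zero_le_one]
  exact key

private lemma rogersL_one : rogersL 1 = π ^ 2 / 6 := by
  have hsymm : ∫ y in (0:ℝ)..1, Real.log y / (1-y) = ∫ y in (0:ℝ)..1, Real.log (1-y) / y := by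
    have h := intervalIntegral.integral_comp_sub_left (fun y => Real.log y / (1 - y)) 1
      (a := 0) (b := 1)
    norm_num at h
    rw [← h]
  rw [rogersL, intervalIntegral.integral_add glog_intble' glog_intble, hsymm, log_int_value]
  ring

private lemma pentagon {x y : ℝ} (hx : x ∈ Ioo (0:ℝ) 1) (hy : y ∈ Ioo (0:ℝ) 1) :
    rogersL x + rogersL (1 - x*y) + rogersL ((1-x)/(1-x*y)) + rogersL ((1-y)/(1-x*y))
      = 2 * rogersL 1 + rogersL (1-y) := by
  obtain ⟨hy0, hy1⟩ := hy
  have hc : ContinuousOn (fun t : ℝ => rogersL t + rogersL (1 - t*y)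
      + rogersL ((1-t)/(1-t*y)) + rogersL ((1-y)/(1-t*y))) (Icc 0 1) := by
    have hden : ∀ t ∈ Icc (0:ℝ) 1, 1 - t*y ≠ 0 := by
      intro t ht; nlinarith [ht.1, ht.2]
    have c2 : ContinuousOn (fun t : ℝ => 1 - t*y) (Icc 0 1) := by fun_prop
    have c3 : ContinuousOn (fun t : ℝ => (1-t)/(1-t*y)) (Icc 0 1) :=
      ContinuousOn.div (by fun_prop) c2 hden
    have c4 : ContinuousOn (fun t : ℝ => (1-y)/(1-t*y)) (Icc 0 1) :=
      ContinuousOn.div (by fun_prop) c2 hden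
    refine (((rogersL_continuousOn.mono subset_rfl).add
      (rogersL_continuousOn.comp c2 fun t ht => ?_)).add
      (rogersL_continuousOn.comp c3 fun t ht => ?_)).add
      (rogersL_continuousOn.comp c4 fun t ht => ?_)
    · constructor <;> nlinarith [ht.1, ht.2]
    · have h1 : 0 < 1 - t*y := by nlinarith [ht.1, ht.2]
      constructor
      · apply div_nonneg (by linarith [ht.2]) h1.le
      · rw [div_le_one h1]; nlinarith [ht.1]
    · have h1 : 0 < 1 - t*y := by nlinarith [ht.1, ht.2]
      constructor
      · apply div_nonneg (by linarith) h1.le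
      · rw [div_le_one h1]
        nlinarith [mul_nonneg hy0.le (sub_nonneg.2 ht.2)]
  have hd : ∀ t ∈ Ioo (0:ℝ) 1, HasDerivAt (fun t : ℝ => rogersL t + rogersL (1 - t*y)
      + rogersL ((1-t)/(1-t*y)) + rogersL ((1-y)/(1-t*y))) 0 t := by
    intro t ht
    obtain ⟨ht0, ht1⟩ := ht
    have hu0 : 0 < 1 - t*y := by nlinarith
    have hu1 : 1 - t*y < 1 := by nlinarith
    have hv : (1-t)/(1-t*y) ∈ Ioo (0:ℝ) 1 := by
      constructor
      · exact div_pos (by linarith) hu0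
      · rw [div_lt_one hu0]; nlinarith
    have hw : (1-y)/(1-t*y) ∈ Ioo (0:ℝ) 1 := by
      constructor
      · exact div_pos (by linarith) hu0
      · rw [div_lt_one hu0]; nlinarith
    have d2i : HasDerivAt (fun t : ℝ => 1 - t*y) (-y) t := by
      simpa using (hasDerivAt_mul_const y (x := t)).const_sub 1
    have d3i : HasDerivAt (fun t : ℝ => (1-t)/(1-t*y))
        (((-1) * (1-t*y) - (1-t) * (-y)) / (1-t*y)^2) t := by
      exact HasDerivAt.div (by simpa using (hasDerivAt_id t).const_sub 1) d2i hu0.ne'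
    have d4i : HasDerivAt (fun t : ℝ => (1-y)/(1-t*y))
        ((0 * (1-t*y) - (1-y) * (-y)) / (1-t*y)^2) t :=
      HasDerivAt.div (hasDerivAt_const t (1-y)) d2i hu0.ne'
    have A1 := rogersL_hasDerivAt ⟨ht0, ht1⟩
    have A2 := (rogersL_hasDerivAt ⟨hu0, hu1⟩).comp t d2i
    have A3 := (rogersL_hasDerivAt hv).comp t d3i
    have A4 := (rogersL_hasDerivAt hw).comp t d4i
    have h := ((A1.add A2).add A3).add A4
    convert h using 1
    rfl
    rfl
    rfl
    have h1t : (0:ℝ) < 1 - t := by linarith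
    have h1y : (0:ℝ) < 1 - y := by linarith
    rw [show (1:ℝ) - (1 - t*y) = t*y from by ring,
      show (1:ℝ) - (1-t)/(1-t*y) = t*(1-y)/(1-t*y) from by field_simp; ring,
      show (1:ℝ) - (1-y)/(1-t*y) = y*(1-t)/(1-t*y) from by rw [eq_div_iff hu0.ne', sub_mul, div_mul_cancel₀ _ hu0.ne']; ring,
      Real.log_mul ht0.ne' hy0.ne',
      Real.log_div (by positivity) hu0.ne',
      Real.log_div (by positivity) hu0.ne',
      Real.log_div (by positivity) hu0.ne',
      Real.log_div (by positivity) hu0.ne',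
      Real.log_mul ht0.ne' h1y.ne',
      Real.log_mul hy0.ne' h1t.ne']
    field_simp
    ring
  have h := constOn_unit hc hd x (Ioo_subset_Icc_self hx)
  norm_num [rogersL_zero] at h
  linarith [h]

/-- Classical dilogarithm identity of type `A₂`, first unsigned form. -/
theorem dilogarithm_identity_A2_unsigned_first (y₁ y₂ : ℝ) (h1 : 0 < y₁) (h2 : 0 < y₂) :
    rogersL (y₁ / (1 + y₁)) + rogersL (y₂ * (1 + y₁) / (1 + y₂ + y₁ * y₂))
      + rogersL ((1 + y₂ + y₁ * y₂) / (1 + y₁ + y₂ + y₁ * y₂))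
      + rogersL ((1 + y₂) / (1 + y₂ + y₁ * y₂))
      + rogersL (1 / (1 + y₂)) = π ^ 2 / 2 := by
  have d1 : (0:ℝ) < 1 + y₁ := by linarith
  have d2 : (0:ℝ) < 1 + y₂ := by linarith
  have d3 : (0:ℝ) < 1 + y₂ + y₁ * y₂ := by positivity
  have d4 : (0:ℝ) < 1 + y₁ + y₂ + y₁ * y₂ := by positivity
  have hx : y₁ / (1 + y₁) ∈ Ioo (0:ℝ) 1 := by
    constructor
    · positivity
    · rw [div_lt_one d1]; linarith
  have hy : 1 / (1 + y₂) ∈ Ioo (0:ℝ) 1 := by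
    constructor
    · positivity
    · rw [div_lt_one d2]; linarith
  have hp := pentagon hx hy
  have e1 : 1 - (y₁ / (1 + y₁)) * (1 / (1 + y₂))
      = (1 + y₂ + y₁ * y₂) / (1 + y₁ + y₂ + y₁ * y₂) := by
    field_simp
    ring
  have hne : 1 - (y₁ / (1 + y₁)) * (1 / (1 + y₂)) ≠ 0 := by
    rw [e1]; positivity
  have e2 : (1 - y₁ / (1 + y₁)) / (1 - (y₁ / (1 + y₁)) * (1 / (1 + y₂)))
      = (1 + y₂) / (1 + y₂ + y₁ * y₂) := by
    rw [div_eq_div_iff hne d3.ne']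
    field_simp
    ring
  have e3 : (1 - 1 / (1 + y₂)) / (1 - (y₁ / (1 + y₁)) * (1 / (1 + y₂)))
      = y₂ * (1 + y₁) / (1 + y₂ + y₁ * y₂) := by
    rw [div_eq_div_iff hne d3.ne']
    field_simp
    ring
  rw [e2, e3, e1] at hp
  have hr := rogersL_reflect (1 / (1 + y₂)) (Ioo_subset_Icc_self hy)
  rw [rogersL_one] at hp hr
  linarith [hp, hr]
end

section
/- Classical dilogarithm identity of type A₂ (second unsigned form): for all real y₁ > 0 and y₂ > 0, L(1/(1+y₁)) + L(1/(1+y₂+y₁y₂)) + L(y₁/(1+y₁+y₂+y₁y₂)) + L(y₁y₂/(1+y₂+y₁y₂)) + L(y₂/(1+y₂)) = π²/3. -/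
open Real

namespace RogersAux

open MeasureTheory intervalIntegral Set Filter Topology

noncomputable def K (y : ℝ) : ℝ := Real.log (1 - y) / y + Real.log y / (1 - y)

lemma K_symm (y : ℝ) : K (1 - y) = K y := by
  simp only [K, sub_sub_cancel]
  ring

lemma measurable_g : Measurable (fun y : ℝ => Real.log (1 - y) / y) :=
  (Real.measurable_log.comp (measurable_const.sub measurable_id)).div measurable_id

lemma neg_log_le_rpow {x : ℝ} (hx : 0 < x) : -Real.log x ≤ 2 * x ^ (-(1/2) : ℝ) := by
  have h1 : (0:ℝ) < x ^ (-(1/2) : ℝ) := Real.rpow_pos_of_pos hx _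
  have h2 : Real.log (x ^ (-(1/2) : ℝ)) ≤ x ^ (-(1/2) : ℝ) - 1 :=
    Real.log_le_sub_one_of_pos h1
  rw [Real.log_rpow hx] at h2
  nlinarith [Real.log_le_sub_one_of_pos hx]

lemma int_majorant : IntervalIntegrable (fun y : ℝ => 2 + 4 * (1 - y) ^ (-(1/2) : ℝ))
    volume 0 1 := by
  have h1 : IntervalIntegrable (fun y : ℝ => y ^ (-(1/2) : ℝ)) volume 0 1 :=
    intervalIntegral.intervalIntegrable_rpow' (by norm_num)
  have h2 := (h1.comp_sub_left 1).symm
  norm_num at h2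
  exact (_root_.intervalIntegrable_const (c := (2:ℝ))).add (h2.const_mul 4)

lemma int_g : IntervalIntegrable (fun y : ℝ => Real.log (1 - y) / y) volume 0 1 := by
  refine int_majorant.mono_fun measurable_g.aestronglyMeasurable ?_
  rw [Filter.EventuallyLE, ae_restrict_iff' measurableSet_uIoc]
  refine Filter.Eventually.of_forall (fun y hy => ?_)
  rw [Set.uIoc_of_le zero_le_one] at hy
  obtain ⟨hy0, hy1⟩ := hy
  have hrpow : (0:ℝ) ≤ (1 - y) ^ (-(1/2) : ℝ) := Real.rpow_nonneg (by linarith) _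
  have hrhs : ‖2 + 4 * (1 - y) ^ (-(1/2) : ℝ)‖ = 2 + 4 * (1 - y) ^ (-(1/2) : ℝ) := by
    rw [Real.norm_eq_abs, abs_of_nonneg]; linarith
  rw [hrhs]
  rcases eq_or_lt_of_le hy1 with h1 | h1
  · subst h1
    simp
  · -- 0 < y < 1
    have h1y : (0:ℝ) < 1 - y := by linarith
    have hlogneg : Real.log (1 - y) ≤ 0 := Real.log_nonpos (by linarith) (by linarith)
    have habs : ‖Real.log (1 - y) / y‖ = -Real.log (1 - y) / y := by
      rw [Real.norm_eq_abs, abs_div, abs_of_nonpos hlogneg, abs_of_pos hy0]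
    rw [habs]
    rcases le_or_gt y (1/2) with h2 | h2
    · -- small y : -log(1-y)/y ≤ 1/(1-y) ≤ 2
      have key : -Real.log (1 - y) ≤ y / (1 - y) := by
        have := Real.log_le_sub_one_of_pos (inv_pos.mpr h1y)
        rw [Real.log_inv] at this
        have : -Real.log (1 - y) ≤ (1 - y)⁻¹ - 1 := this
        have heq : (1 - y)⁻¹ - 1 = y / (1 - y) := by field_simp; ring
        linarith [heq ▸ this]
      have h3 : -Real.log (1 - y) / y ≤ 1 / (1 - y) := by
        rw [div_le_div_iff₀ hy0 h1y]
        calc -Real.log (1 - y) * (1 - y) ≤ (y / (1 - y)) * (1 - y) := by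
              apply mul_le_mul_of_nonneg_right key (by linarith)
          _ = y := by field_simp
          _ ≤ 1 * y := by ring_nf; exact le_rfl
      have h4 : 1 / (1 - y) ≤ 2 := by
        rw [div_le_iff₀ h1y]; linarith
      linarith
    · -- large y : ≤ 2 * (-log(1-y)) ≤ 4 * (1-y)^(-1/2)
      have key := neg_log_le_rpow h1y
      have h3 : -Real.log (1 - y) / y ≤ 2 * -Real.log (1 - y) := by
        rw [div_le_iff₀ hy0]
        have hl : (0:ℝ) ≤ -Real.log (1 - y) := by linarith
        nlinarith
      linarith

lemma int_h : IntervalIntegrable (fun y : ℝ => Real.log y / (1 - y)) volume 0 1 := by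
  have := (int_g.comp_sub_left 1).symm
  norm_num at this
  exact this

lemma int_K : IntervalIntegrable K volume 0 1 := int_g.add int_h

lemma int_K' {x : ℝ} (hx : x ∈ Icc (0:ℝ) 1) : IntervalIntegrable K volume 0 x :=
  int_K.mono_set (by
    rw [Set.uIcc_of_le hx.1, Set.uIcc_of_le zero_le_one]
    exact Set.Icc_subset_Icc le_rfl hx.2)


lemma summable_inv_sq : Summable (fun n : ℕ => 1 / ((n : ℝ) + 1) ^ 2) := by
  have h : Summable (fun n : ℕ => 1 / (n : ℝ) ^ 2) :=
    Real.summable_one_div_nat_pow.mpr one_lt_two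
  have := (summable_nat_add_iff 1).mpr h
  simpa using this

lemma tsum_inv_sq : ∑' n : ℕ, 1 / ((n : ℝ) + 1) ^ 2 = π ^ 2 / 6 := by
  have h := hasSum_zeta_two.tsum_eq
  have h2 := Summable.tsum_eq_zero_add (hasSum_zeta_two.summable)
  rw [h] at h2
  simp only [Nat.cast_zero] at h2
  norm_num at h2
  rw [h2]
  simp [one_div]

lemma integral_g_value : ∫ y in (0:ℝ)..1, Real.log (1 - y) / y = -(π ^ 2 / 6) := by
  have key : ∫ y in Set.Ioo (0:ℝ) 1, -(Real.log (1 - y) / y) = π ^ 2 / 6 := by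
    have hsum : ∀ y ∈ Set.Ioo (0:ℝ) 1,
        ∑' n : ℕ, y ^ n / ((n : ℝ) + 1) = -(Real.log (1 - y) / y) := by
      intro y hy
      have hy0 : y ≠ 0 := ne_of_gt hy.1
      have habs : |y| < 1 := by
        rw [abs_of_pos hy.1]; exact hy.2
      have h := (hasSum_pow_div_log_of_abs_lt_one habs).div_const y
      have heq : (fun n : ℕ => y ^ (n + 1) / ((n : ℝ) + 1) / y)
          = fun n : ℕ => y ^ n / ((n : ℝ) + 1) := by
        funext n
        rw [pow_succ]
        field_simp
      rw [heq] at h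
      rw [h.tsum_eq, neg_div]
    have hint : ∀ n : ℕ, IntegrableOn (fun y : ℝ => y ^ n / ((n : ℝ) + 1))
        (Set.Ioo (0:ℝ) 1) volume := by
      intro n
      exact ((continuous_pow n).div_const _).integrableOn_Icc.mono_set Set.Ioo_subset_Icc_self
    have hval : ∀ n : ℕ, ∫ y in Set.Ioo (0:ℝ) 1, y ^ n / ((n : ℝ) + 1)
        = 1 / ((n : ℝ) + 1) ^ 2 := by
      intro n
      rw [← MeasureTheory.integral_Ioc_eq_integral_Ioo,
        ← intervalIntegral.integral_of_le zero_le_one]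
      rw [intervalIntegral.integral_div, integral_pow]
      push_cast
      rw [one_pow, zero_pow (Nat.succ_ne_zero n)]
      field_simp
      ring
    have hnorm : ∀ n : ℕ, ∫ y in Set.Ioo (0:ℝ) 1, ‖(fun y : ℝ => y ^ n / ((n : ℝ) + 1)) y‖
        = 1 / ((n : ℝ) + 1) ^ 2 := by
      intro n
      rw [← hval n]
      apply MeasureTheory.setIntegral_congr_fun measurableSet_Ioo
      intro y hy
      simp only [Real.norm_eq_abs]
      rw [abs_of_nonneg (div_nonneg (pow_nonneg hy.1.le n) (by positivity))]
    have hswap := MeasureTheory.integral_tsum_of_summable_integral_norm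
      (μ := volume.restrict (Set.Ioo (0:ℝ) 1))
      (F := fun (n : ℕ) (y : ℝ) => y ^ n / ((n : ℝ) + 1))
      (fun n => hint n) (by
        apply Summable.congr summable_inv_sq
        intro n
        exact (hnorm n).symm)
    have h1 : ∑' n : ℕ, ∫ y in Set.Ioo (0:ℝ) 1, y ^ n / ((n : ℝ) + 1) = π ^ 2 / 6 := by
      rw [tsum_congr hval]
      exact tsum_inv_sq
    rw [h1] at hswap
    rw [hswap]
    apply MeasureTheory.setIntegral_congr_fun measurableSet_Ioo
    intro y hy
    exact (hsum y hy).symm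
  rw [intervalIntegral.integral_of_le zero_le_one,
    MeasureTheory.integral_Ioc_eq_integral_Ioo]
  rw [MeasureTheory.integral_neg] at key
  linarith [key]

lemma integral_h_value : ∫ y in (0:ℝ)..1, Real.log y / (1 - y) = -(π ^ 2 / 6) := by
  have h := intervalIntegral.integral_comp_sub_left (a := (0:ℝ)) (b := (1:ℝ))
    (fun y : ℝ => Real.log (1 - y) / y) 1
  norm_num at h
  rw [h]
  exact integral_g_value

lemma integral_K_value : ∫ y in (0:ℝ)..1, K y = -(π ^ 2 / 3) := by
  unfold K
  rw [intervalIntegral.integral_add int_g int_h, integral_g_value, integral_h_value]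
  ring


lemma rogersL_eq (x : ℝ) : rogersL x = -(1/2) * ∫ y in (0:ℝ)..x, K y := rfl

lemma rogersL_zero : rogersL 0 = 0 := by
  rw [rogersL_eq, intervalIntegral.integral_same, mul_zero]

lemma rogersL_reflect {x : ℝ} (hx : x ∈ Set.Icc (0:ℝ) 1) :
    rogersL x + rogersL (1 - x) = π ^ 2 / 6 := by
  have hx' : 1 - x ∈ Set.Icc (0:ℝ) 1 := ⟨by linarith [hx.2], by linarith [hx.1]⟩
  have h1 : ∫ y in (0:ℝ)..(1 - x), K y = ∫ y in x..1, K y := by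
    have h2 : (fun y : ℝ => K y) = fun y => K (1 - y) := by
      funext y; rw [K_symm]
    calc ∫ y in (0:ℝ)..(1 - x), K y = ∫ y in (0:ℝ)..(1 - x), K (1 - y) := by rw [← h2]
      _ = ∫ y in (1 - (1 - x))..(1 - 0), K y :=
        intervalIntegral.integral_comp_sub_left K 1
      _ = ∫ y in x..1, K y := by norm_num
  have hadj : (∫ y in (0:ℝ)..x, K y) + ∫ y in x..1, K y = ∫ y in (0:ℝ)..1, K y :=
    intervalIntegral.integral_add_adjacent_intervals (int_K' hx)
      (int_K.mono_set (by
        rw [Set.uIcc_of_le hx.2, Set.uIcc_of_le zero_le_one]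
        exact Set.Icc_subset_Icc hx.1 le_rfl))
  rw [rogersL_eq, rogersL_eq, h1]
  have := integral_K_value
  nlinarith [hadj, this]

lemma rogersL_one : rogersL 1 = π ^ 2 / 6 := by
  have := rogersL_reflect (x := 1) (by norm_num)
  simpa [rogersL_zero] using this

lemma continuousOn_rogersL : ContinuousOn rogersL (Set.Icc 0 1) := by
  have hK : IntegrableOn K (Set.uIcc (0:ℝ) 1) volume := by
    rw [Set.uIcc_of_le zero_le_one]
    exact (intervalIntegrable_iff_integrableOn_Icc_of_le zero_le_one).mp int_K
  have h := intervalIntegral.continuousOn_primitive_interval (a := (0:ℝ)) (b := 1) hK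
  rw [Set.uIcc_of_le zero_le_one] at h
  exact fun x hx => ((h x hx).const_smul (-(1/2) : ℝ)).congr
    (fun y _ => by rw [rogersL_eq]; simp [smul_eq_mul]) (by rw [rogersL_eq]; simp [smul_eq_mul])

noncomputable def rl' (x : ℝ) : ℝ := -(1/2) * (Real.log (1 - x) / x + Real.log x / (1 - x))

lemma hasDerivAt_rogersL {x : ℝ} (hx : x ∈ Set.Ioo (0:ℝ) 1) :
    HasDerivAt rogersL (rl' x) x := by
  obtain ⟨hx0, hx1⟩ := hx
  have hcont : ContinuousAt K x := by
    have c1 : ContinuousAt (fun y : ℝ => Real.log (1 - y)) x :=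
      (Real.continuousAt_log (by linarith)).comp
        ((continuous_const.sub continuous_id).continuousAt)
    have c2 : ContinuousAt (fun y : ℝ => Real.log y) x :=
      Real.continuousAt_log (ne_of_gt hx0)
    exact (c1.div continuousAt_id (ne_of_gt hx0)).add
      (c2.div ((continuous_const.sub continuous_id).continuousAt) (by simp; linarith))
  have hmeas : StronglyMeasurableAtFilter K (nhds x) :=
    ((measurable_g.add ((Real.measurable_log.div
      (measurable_const.sub measurable_id)))).stronglyMeasurable).stronglyMeasurableAtFilter
  have hFTC := intervalIntegral.integral_hasDerivAt_right
    (int_K' ⟨hx0.le, hx1.le⟩) hmeas hcont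
  have := hFTC.const_mul (-(1/2) : ℝ)
  exact this


noncomputable def Phi (p t : ℝ) : ℝ :=
  rogersL (1 / (1 + p)) + rogersL (1 / (1 + t + p * t))
    + rogersL (p / (1 + p + t + p * t))
    + rogersL (p * t / (1 + t + p * t))
    + rogersL (t / (1 + t))

set_option maxHeartbeats 1000000 in
lemma hasDerivAt_Phi {p t : ℝ} (hp : 0 < p) (ht : 0 < t) : HasDerivAt (Phi p) 0 t := by
  have hp1 : (0:ℝ) < 1 + p := by linarith
  have hb : (0:ℝ) < 1 + t := by linarith
  have hc : (0:ℝ) < 1 + t + p * t := by nlinarith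
  have hab : (0:ℝ) < 1 + p + t + p * t := by nlinarith
  -- membership of the arguments in (0,1)
  have m2 : 1 / (1 + t + p * t) ∈ Set.Ioo (0:ℝ) 1 :=
    ⟨by positivity, by rw [div_lt_one hc]; nlinarith⟩
  have m3 : p / (1 + p + t + p * t) ∈ Set.Ioo (0:ℝ) 1 :=
    ⟨by positivity, by rw [div_lt_one hab]; nlinarith⟩
  have m4 : p * t / (1 + t + p * t) ∈ Set.Ioo (0:ℝ) 1 :=
    ⟨by positivity, by rw [div_lt_one hc]; nlinarith⟩
  have m5 : t / (1 + t) ∈ Set.Ioo (0:ℝ) 1 :=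
    ⟨by positivity, by rw [div_lt_one hb]; nlinarith⟩
  -- derivatives of the inner rational functions
  have l1 : HasDerivAt (fun s : ℝ => 1 + s + p * s) (1 + p) t := by
    have := ((hasDerivAt_id t).const_add (1:ℝ)).add ((hasDerivAt_id t).const_mul p)
    simp only [mul_one] at this; exact this
  have l2 : HasDerivAt (fun s : ℝ => 1 + p + s + p * s) (1 + p) t := by
    have := ((hasDerivAt_id t).const_add (1 + p)).add ((hasDerivAt_id t).const_mul p)
    simp only [mul_one] at this; exact this
  have l3 : HasDerivAt (fun s : ℝ => 1 + s) (1:ℝ) t := by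
    simpa using (hasDerivAt_id t).const_add (1:ℝ)
  have l4 : HasDerivAt (fun s : ℝ => p * s) p t := by
    simpa using (hasDerivAt_id t).const_mul p
  have d2 : HasDerivAt (fun s : ℝ => 1 / (1 + s + p * s))
      ((0 * (1 + t + p * t) - 1 * (1 + p)) / (1 + t + p * t) ^ 2) t :=
    (hasDerivAt_const t (1:ℝ)).div l1 hc.ne'
  have d3 : HasDerivAt (fun s : ℝ => p / (1 + p + s + p * s))
      ((0 * (1 + p + t + p * t) - p * (1 + p)) / (1 + p + t + p * t) ^ 2) t :=
    (hasDerivAt_const t p).div l2 hab.ne'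
  have d4 : HasDerivAt (fun s : ℝ => p * s / (1 + s + p * s))
      ((p * (1 + t + p * t) - p * t * (1 + p)) / (1 + t + p * t) ^ 2) t :=
    l4.div l1 hc.ne'
  have d5 : HasDerivAt (fun s : ℝ => s / (1 + s))
      ((1 * (1 + t) - t * 1) / (1 + t) ^ 2) t :=
    (hasDerivAt_id t).div l3 hb.ne'
  have D2 := HasDerivAt.comp t (hasDerivAt_rogersL m2) d2
  have D3 := HasDerivAt.comp t (hasDerivAt_rogersL m3) d3
  have D4 := HasDerivAt.comp t (hasDerivAt_rogersL m4) d4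
  have D5 := HasDerivAt.comp t (hasDerivAt_rogersL m5) d5
  have H : HasDerivAt (Phi p)
      (rl' (1 / (1 + t + p * t)) * ((0 * (1 + t + p * t) - 1 * (1 + p)) / (1 + t + p * t) ^ 2)
        + rl' (p / (1 + p + t + p * t)) *
          ((0 * (1 + p + t + p * t) - p * (1 + p)) / (1 + p + t + p * t) ^ 2)
        + rl' (p * t / (1 + t + p * t)) *
          ((p * (1 + t + p * t) - p * t * (1 + p)) / (1 + t + p * t) ^ 2)
        + rl' (t / (1 + t)) * ((1 * (1 + t) - t * 1) / (1 + t) ^ 2)) t := by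
    exact (((D2.const_add (rogersL (1 / (1 + p)))).add D3).add D4).add D5
  have hzero :
      rl' (1 / (1 + t + p * t)) * ((0 * (1 + t + p * t) - 1 * (1 + p)) / (1 + t + p * t) ^ 2)
        + rl' (p / (1 + p + t + p * t)) *
          ((0 * (1 + p + t + p * t) - p * (1 + p)) / (1 + p + t + p * t) ^ 2)
        + rl' (p * t / (1 + t + p * t)) *
          ((p * (1 + t + p * t) - p * t * (1 + p)) / (1 + t + p * t) ^ 2)
        + rl' (t / (1 + t)) * ((1 * (1 + t) - t * 1) / (1 + t) ^ 2) = 0 := by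
    simp only [rl']
    rw [show (1:ℝ) - 1 / (1 + t + p * t) = t * (1 + p) / (1 + t + p * t) from by
          field_simp <;> ring,
        show (1:ℝ) - p / (1 + p + t + p * t) = (1 + t + p * t) / ((1 + p) * (1 + t)) from by
          rw [show (1:ℝ) + p + t + p * t = (1 + p) * (1 + t) from by ring]
          field_simp <;> ring,
        show (1:ℝ) - p * t / (1 + t + p * t) = (1 + t) / (1 + t + p * t) from by
          field_simp <;> ring,
        show (1:ℝ) - t / (1 + t) = 1 / (1 + t) from by
          field_simp <;> ring,
        show p / (1 + p + t + p * t) = p / ((1 + p) * (1 + t)) from by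
          rw [show (1:ℝ) + p + t + p * t = (1 + p) * (1 + t) from by ring]]
    rw [Real.log_div (by positivity) hc.ne', Real.log_mul ht.ne' hp1.ne',
        Real.log_div one_ne_zero hc.ne',
        Real.log_div hc.ne' (by positivity), Real.log_mul hp1.ne' hb.ne',
        Real.log_div hp.ne' (by positivity),
        Real.log_mul hp1.ne' hb.ne',
        Real.log_div hb.ne' hc.ne',
        Real.log_div (by positivity) hc.ne', Real.log_mul hp.ne' ht.ne',
        Real.log_div one_ne_zero hb.ne',
        Real.log_div ht.ne' hb.ne',
        Real.log_one]
    field_simp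
    ring
  rw [hzero] at H
  exact H


lemma Phi_const {p : ℝ} (hp : 0 < p) {s u : ℝ} (hs : 0 < s) (hu : 0 < u) :
    Phi p s = Phi p u := by
  have key : ∀ a b : ℝ, 0 < a → a < b → Phi p a = Phi p b := by
    intro a b ha hab
    have hcont : ContinuousOn (Phi p) (Set.Icc a b) := fun x hx =>
      ((hasDerivAt_Phi hp (lt_of_lt_of_le ha hx.1)).continuousAt).continuousWithinAt
    obtain ⟨c, _, h0⟩ := exists_hasDerivAt_eq_slope (Phi p) (fun _ => (0:ℝ)) hab hcont
      (fun x hx => hasDerivAt_Phi hp (ha.trans hx.1))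
    have hba : b - a ≠ 0 := sub_ne_zero.mpr hab.ne'
    rcases div_eq_zero_iff.mp h0.symm with h | h
    · linarith
    · exact absurd h hba
  rcases lt_trichotomy s u with h | h | h
  · exact key s u hs h
  · rw [h]
  · exact (key u s hu h).symm

lemma tendsto_Phi {p : ℝ} (hp : 0 < p) :
    Filter.Tendsto (Phi p) (nhdsWithin 0 (Set.Ioi 0)) (nhds (π ^ 2 / 3)) := by
  have hp1 : (0:ℝ) < 1 + p := by linarith
  have comp : ∀ (g : ℝ → ℝ) (L : ℝ), ContinuousAt g 0 → g 0 = L → L ∈ Set.Icc (0:ℝ) 1 →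
      (∀ t : ℝ, 0 < t → g t ∈ Set.Icc (0:ℝ) 1) →
      Filter.Tendsto (fun t => rogersL (g t)) (nhdsWithin 0 (Set.Ioi 0))
        (nhds (rogersL L)) := by
    intro g L hg hg0 hL hmem
    have h1 : Filter.Tendsto g (nhdsWithin 0 (Set.Ioi 0)) (nhdsWithin L (Set.Icc 0 1)) := by
      rw [tendsto_nhdsWithin_iff]
      constructor
      · have h0' : Filter.Tendsto g (nhdsWithin 0 (Set.Ioi 0)) (nhds (g 0)) :=
          hg.tendsto.mono_left nhdsWithin_le_nhds
        rwa [hg0] at h0'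
      · exact eventually_nhdsWithin_of_forall (fun t ht => hmem t ht)
    exact ((continuousOn_rogersL L hL).tendsto).comp h1
  have t1 : Filter.Tendsto (fun _ : ℝ => rogersL (1 / (1 + p))) (nhdsWithin 0 (Set.Ioi 0))
      (nhds (rogersL (1 / (1 + p)))) := tendsto_const_nhds
  have t2 := comp (fun t => 1 / (1 + t + p * t)) 1
    (ContinuousAt.div continuousAt_const (by fun_prop) (by norm_num)) (by norm_num)
    (by norm_num)
    (fun t ht => ⟨by positivity, by rw [div_le_one (by nlinarith)]; nlinarith⟩)
  have t3 := comp (fun t => p / (1 + p + t + p * t)) (p / (1 + p))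
    (ContinuousAt.div continuousAt_const (by fun_prop) (by norm_num; nlinarith)) (by norm_num)
    ⟨by positivity, by rw [div_le_one hp1]; linarith⟩
    (fun t ht => ⟨by positivity, by rw [div_le_one (by nlinarith)]; nlinarith⟩)
  have t4 := comp (fun t => p * t / (1 + t + p * t)) 0
    (ContinuousAt.div (by fun_prop) (by fun_prop) (by norm_num)) (by norm_num)
    (by norm_num)
    (fun t ht => ⟨by positivity, by rw [div_le_one (by nlinarith)]; nlinarith⟩)
  have t5 := comp (fun t => t / (1 + t)) 0
    (ContinuousAt.div continuousAt_id (by fun_prop) (by norm_num)) (by norm_num)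
    (by norm_num)
    (fun t ht => ⟨by positivity, by rw [div_le_one (by nlinarith)]; nlinarith⟩)
  have hval : rogersL (1 / (1 + p)) + rogersL 1 + rogersL (p / (1 + p))
      + rogersL 0 + rogersL 0 = π ^ 2 / 3 := by
    have hrefl := rogersL_reflect (x := 1 / (1 + p))
      ⟨by positivity, by rw [div_le_one hp1]; linarith⟩
    rw [show (1:ℝ) - 1 / (1 + p) = p / (1 + p) from by field_simp; ring] at hrefl
    rw [rogersL_one, rogersL_zero]
    linarith
  have := ((((t1.add t2).add t3).add t4).add t5)
  rw [hval] at this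
  exact this

end RogersAux

/-- Classical dilogarithm identity of type `A₂`, second unsigned form. -/
theorem dilogarithm_identity_A2_unsigned_second (y₁ y₂ : ℝ) (h1 : 0 < y₁) (h2 : 0 < y₂) :
    rogersL (1 / (1 + y₁)) + rogersL (1 / (1 + y₂ + y₁ * y₂))
      + rogersL (y₁ / (1 + y₁ + y₂ + y₁ * y₂))
      + rogersL (y₁ * y₂ / (1 + y₂ + y₁ * y₂))
      + rogersL (y₂ / (1 + y₂)) = π ^ 2 / 3 := by
  have ht := RogersAux.tendsto_Phi h1
  have hc : Filter.Tendsto (RogersAux.Phi y₁) (nhdsWithin 0 (Set.Ioi 0))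
      (nhds (RogersAux.Phi y₁ y₂)) := by
    apply Filter.Tendsto.congr' _ tendsto_const_nhds
    filter_upwards [self_mem_nhdsWithin] with t htm
    exact RogersAux.Phi_const h1 h2 htm
  exact tendsto_nhds_unique hc ht
end

section
/- Adjoint action of the quantum dilogarithm: let 𝒜 be a complex unital Banach algebra, q ∈ ℂ with 0 < |q| < 1, b a nonzero integer with sign s = sgn(b), and U, V ∈ 𝒜 with U·V = q^{2b}·V·U and ‖V‖ < |q|^{2|b|}. Then Ψ_q(V) is invertible, each element 1 + q^{−s(2m−1)} V for 1 ≤ m ≤ |b| is invertible, and Ψ_q(V)·U·Ψ_q(V)^{−1} = U·∏_{m=1}^{|b|} (1 + q^{−s(2m−1)} V)^{−s}. -/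
/-- The quantum dilogarithm `Ψ_q(W) = Σₙ (-q)ⁿ Wⁿ / ∏_{k=1}^n (1 - q^{2k})` of an
element `W` of a complex unital Banach algebra, for `0 < |q| < 1` and `‖W‖ < 1/|q|`. -/
noncomputable def quantumPsiB {A : Type*} [NormedRing A] [NormedAlgebra ℂ A]
    (q : ℂ) (W : A) : A :=
  ∑' n : ℕ, ((-q) ^ n / ∏ k ∈ Finset.range n, (1 - q ^ (2 * (k + 1)))) • W ^ n



/-- Coefficients of the quantum dilogarithm. -/
noncomputable def qpc (q : ℂ) (n : ℕ) : ℂ :=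
  (-q) ^ n / ∏ k ∈ Finset.range n, (1 - q ^ (2 * (k + 1)))

lemma qpow_ne {q : ℂ} (hq1 : ‖q‖ < 1) (n : ℕ) : 1 - q ^ (2 * (n + 1)) ≠ 0 := by
  intro h
  have h1 : q ^ (2 * (n + 1)) = 1 := by linear_combination -h
  have h2 : ‖q ^ (2 * (n + 1))‖ < 1 := by
    rw [norm_pow]
    exact pow_lt_one₀ (norm_nonneg q) hq1 (by omega)
  rw [h1, norm_one] at h2
  exact lt_irrefl _ h2

lemma qprod_ne {q : ℂ} (hq1 : ‖q‖ < 1) (m : ℕ) :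
    (∏ k ∈ Finset.range m, (1 - q ^ (2 * (k + 1)))) ≠ 0 :=
  Finset.prod_ne_zero_iff.2 fun k _ => qpow_ne hq1 k

lemma qpc_zero (q : ℂ) : qpc q 0 = 1 := by simp [qpc]

lemma qpc_succ {q : ℂ} (hq1 : ‖q‖ < 1) (n : ℕ) :
    qpc q (n + 1) * (1 - q ^ (2 * (n + 1))) = -q * qpc q n := by
  have hPn := qprod_ne hq1 (q := q) n
  have h1 := qpow_ne hq1 (q := q) n
  rw [qpc, qpc, Finset.prod_range_succ]
  field_simp
  ring

noncomputable def qC (q : ℂ) : ℝ := Real.exp (‖q‖ ^ 2 / (1 - ‖q‖ ^ 2) ^ 2)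

lemma one_le_qC (q : ℂ) (hq1 : ‖q‖ < 1) : 1 ≤ qC q := by
  rw [qC, ← Real.exp_zero]
  apply Real.exp_le_exp.2
  have : ‖q‖ ^ 2 < 1 := pow_lt_one₀ (norm_nonneg q) hq1 (by omega)
  positivity

lemma exp_le_one_sub {r x : ℝ} (hr0 : 0 ≤ r) (hr1 : r < 1) (hx0 : 0 ≤ x) (hxr : x ≤ r ^ 2) :
    Real.exp (-(x / (1 - r ^ 2))) ≤ 1 - x := by
  have hr2 : r ^ 2 < 1 := by nlinarith
  have h12 : 0 < 1 - r ^ 2 := by nlinarith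
  set t := x / (1 - r ^ 2) with ht
  have ht0 : 0 ≤ t := by positivity
  have h1 : t + 1 ≤ Real.exp t := Real.add_one_le_exp t
  have h2 : (1 - x) * (1 + t) ≥ 1 := by
    have h3 : t * (1 - x) ≥ x := by
      rw [ht, ge_iff_le, div_mul_eq_mul_div, le_div_iff₀ (by nlinarith)]
      nlinarith
    nlinarith
  have hepos := Real.exp_pos t
  have hinv : Real.exp (-t) * Real.exp t = 1 := by
    rw [← Real.exp_add]; simp
  nlinarith [Real.exp_pos (-t)]

lemma prod_lb {q : ℂ} (hq1 : ‖q‖ < 1) (n : ℕ) :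
    Real.exp (-(‖q‖ ^ 2 / (1 - ‖q‖ ^ 2) ^ 2)) ≤ ‖∏ k ∈ Finset.range n, (1 - q ^ (2 * (k + 1)))‖ := by
  have hr0 : (0:ℝ) ≤ ‖q‖ := norm_nonneg q
  have hr2 : ‖q‖ ^ 2 < 1 := by nlinarith
  rw [norm_prod]
  calc Real.exp (-(‖q‖ ^ 2 / (1 - ‖q‖ ^ 2) ^ 2))
      ≤ Real.exp (-((∑ k ∈ Finset.range n, ‖q‖ ^ (2 * (k + 1))) / (1 - ‖q‖ ^ 2))) := by
        apply Real.exp_le_exp.2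
        have h12 : (0:ℝ) < 1 - ‖q‖ ^ 2 := by nlinarith
        have h12' : ((1:ℝ) - ‖q‖ ^ 2) ≠ 0 := ne_of_gt h12
        rw [neg_le_neg_iff, div_le_div_iff₀ h12 (by positivity)]
        have hgeom : ∑ k ∈ Finset.range n, ‖q‖ ^ (2 * (k + 1)) ≤ ‖q‖ ^ 2 / (1 - ‖q‖ ^ 2) := by
          have he : ∑ k ∈ Finset.range n, ‖q‖ ^ (2 * (k + 1))
              = ‖q‖ ^ 2 * ∑ k ∈ Finset.range n, (‖q‖ ^ 2) ^ k := by
            rw [Finset.mul_sum]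
            exact Finset.sum_congr rfl fun k _ => by rw [← pow_mul]; ring_nf
          have hs : ∑ k ∈ Finset.range n, (‖q‖ ^ 2) ^ k ≤ (1 - ‖q‖ ^ 2)⁻¹ := by
            have := Summable.sum_le_tsum (f := fun k : ℕ => (‖q‖ ^ 2) ^ k) (Finset.range n)
              (fun i _ => by positivity) (summable_geometric_of_lt_one (by positivity) hr2)
            rwa [tsum_geometric_of_lt_one (by positivity) hr2] at this
          rw [he, div_eq_mul_inv]
          exact mul_le_mul_of_nonneg_left hs (by positivity)
        calc (∑ k ∈ Finset.range n, ‖q‖ ^ (2 * (k + 1))) * (1 - ‖q‖ ^ 2) ^ 2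
            ≤ (‖q‖ ^ 2 / (1 - ‖q‖ ^ 2)) * (1 - ‖q‖ ^ 2) ^ 2 := by
              exact mul_le_mul_of_nonneg_right hgeom (by positivity)
          _ = ‖q‖ ^ 2 * (1 - ‖q‖ ^ 2) := by
              rw [sq (1 - ‖q‖ ^ 2), ← mul_assoc, div_mul_cancel₀ _ h12']
    _ = ∏ k ∈ Finset.range n, Real.exp (-(‖q‖ ^ (2 * (k + 1)) / (1 - ‖q‖ ^ 2))) := by
        rw [← Real.exp_sum]
        congr 1
        rw [Finset.sum_div] at *
        rw [Finset.sum_neg_distrib]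
    _ ≤ ∏ k ∈ Finset.range n, ‖1 - q ^ (2 * (k + 1))‖ := by
        apply Finset.prod_le_prod (fun k _ => (Real.exp_pos _).le)
        intro k _
        calc Real.exp (-(‖q‖ ^ (2 * (k + 1)) / (1 - ‖q‖ ^ 2)))
            ≤ 1 - ‖q‖ ^ (2 * (k + 1)) :=
              exp_le_one_sub hr0 hq1 (by positivity)
                (pow_le_pow_of_le_one hr0 hq1.le (by omega))
          _ ≤ ‖1 - q ^ (2 * (k + 1))‖ := by
              have := norm_sub_norm_le (1 : ℂ) (q ^ (2 * (k + 1)))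
              rw [norm_one, norm_pow] at this
              exact this

lemma qpc_bound {q : ℂ} (hq1 : ‖q‖ < 1) (n : ℕ) : ‖qpc q n‖ ≤ qC q * ‖q‖ ^ n := by
  have h := prod_lb hq1 (q := q) n
  have hpos : (0:ℝ) < Real.exp (-(‖q‖ ^ 2 / (1 - ‖q‖ ^ 2) ^ 2)) := Real.exp_pos _
  rw [qpc, norm_div, norm_pow, norm_neg]
  rw [div_le_iff₀ (lt_of_lt_of_le hpos h)]
  calc ‖q‖ ^ n = (qC q * ‖q‖ ^ n) * Real.exp (-(‖q‖ ^ 2 / (1 - ‖q‖ ^ 2) ^ 2)) := by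
        rw [qC, mul_assoc, mul_comm (‖q‖ ^ n), ← mul_assoc, ← Real.exp_add]
        simp
    _ ≤ (qC q * ‖q‖ ^ n) * ‖∏ k ∈ Finset.range n, (1 - q ^ (2 * (k + 1)))‖ := by
        apply mul_le_mul_of_nonneg_left h
        have := one_le_qC q hq1
        positivity

section alg
variable {A : Type*} [NormedRing A] [NormedAlgebra ℂ A] [CompleteSpace A]

noncomputable def qPsi (q : ℂ) (W : A) : A := ∑' n : ℕ, qpc q n • W ^ n

lemma qsummable_norm {q : ℂ} (hq1 : ‖q‖ < 1) (W : A) (hW : ‖q‖ * ‖W‖ < 1) :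
    Summable (fun n : ℕ => ‖qpc q n • W ^ n‖) := by
  have hC1 := one_le_qC q hq1
  have hbd : ∀ n : ℕ, ‖qpc q n • W ^ n‖ ≤ (qC q * (‖(1:A)‖ + 1)) * (‖q‖ * ‖W‖) ^ n := by
    intro n
    match n with
    | 0 =>
      simp only [pow_zero, qpc_zero, one_smul, mul_one]
      nlinarith [norm_nonneg (1:A)]
    | (m+1) =>
      rw [norm_smul, mul_pow]
      calc ‖qpc q (m+1)‖ * ‖W ^ (m+1)‖ ≤ (qC q * ‖q‖ ^ (m+1)) * ‖W‖ ^ (m+1) := by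
            apply mul_le_mul (qpc_bound hq1 (m+1)) (norm_pow_le' W m.succ_pos)
              (norm_nonneg _) (by positivity)
        _ ≤ (qC q * (‖(1:A)‖ + 1)) * (‖q‖ ^ (m+1) * ‖W‖ ^ (m+1)) := by
            have h1 : qC q ≤ qC q * (‖(1:A)‖ + 1) := by nlinarith [norm_nonneg (1:A)]
            have h2 : (0:ℝ) ≤ ‖q‖ ^ (m+1) * ‖W‖ ^ (m+1) := by positivity
            nlinarith
  exact Summable.of_nonneg_of_le (fun n => norm_nonneg _) hbd
    (((summable_geometric_of_lt_one (by positivity) hW).mul_left _))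

lemma qsummable {q : ℂ} (hq1 : ‖q‖ < 1) (W : A) (hW : ‖q‖ * ‖W‖ < 1) :
    Summable (fun n : ℕ => qpc q n • W ^ n) :=
  (qsummable_norm hq1 W hW).of_norm

lemma qPsi_smul (q c : ℂ) (W : A) :
    qPsi q (c • W) = ∑' n : ℕ, (qpc q n * c ^ n) • W ^ n := by
  rw [qPsi]
  congr 1
  funext n
  rw [smul_pow, smul_smul]

lemma qsummable_smul {q : ℂ} (hq1 : ‖q‖ < 1) (c : ℂ) (W : A) (hW : ‖q‖ * ‖c • W‖ < 1) :
    Summable (fun n : ℕ => (qpc q n * c ^ n) • W ^ n) := by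
  have := qsummable hq1 (c • W) hW
  simpa [smul_pow, smul_smul] using this

lemma qPsi_funEq {q : ℂ} (hq1 : ‖q‖ < 1) (W : A) (hW : ‖q‖ * ‖W‖ < 1) :
    (1 + q • W) * qPsi q W = qPsi q ((q ^ 2 : ℂ) • W) := by
  have hq0 : (0:ℝ) ≤ ‖q‖ := norm_nonneg q
  have hW2 : ‖q‖ * ‖(q ^ 2 : ℂ) • W‖ < 1 := by
    rw [norm_smul, norm_pow]
    calc ‖q‖ * (‖q‖ ^ 2 * ‖W‖) = ‖q‖ ^ 2 * (‖q‖ * ‖W‖) := by ring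
      _ ≤ 1 * (‖q‖ * ‖W‖) := by
          apply mul_le_mul_of_nonneg_right (pow_le_one₀ hq0 hq1.le) (by positivity)
      _ < 1 := by rwa [one_mul]
  have hS : Summable (fun n : ℕ => qpc q n • W ^ n) := qsummable hq1 W hW
  have hS2 : Summable (fun n : ℕ => (qpc q n * (q ^ 2) ^ n) • W ^ n) :=
    qsummable_smul hq1 _ W hW2
  rw [qPsi_smul]
  -- expand LHS
  have hmul : (q • W) * qPsi q W = ∑' n : ℕ, (q * qpc q n) • W ^ (n + 1) := by
    rw [qPsi, ← hS.tsum_mul_left (q • W)]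
    congr 1
    funext n
    rw [smul_mul_assoc, mul_smul_comm, smul_smul, pow_succ']
  have hsub : (∑' n : ℕ, (qpc q n * (q ^ 2) ^ n) • W ^ n) - (∑' n : ℕ, qpc q n • W ^ n)
      = ∑' n : ℕ, (q * qpc q n) • W ^ (n + 1) := by
    rw [← Summable.tsum_sub hS2 hS]
    have hterm : (fun n : ℕ => (qpc q n * (q ^ 2) ^ n) • W ^ n - qpc q n • W ^ n)
        = fun n : ℕ => (qpc q n * ((q ^ 2) ^ n - 1)) • W ^ n := by
      funext n
      rw [← sub_smul]
      congr 1
      ring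
    rw [hterm]
    have hsum3 : Summable (fun n : ℕ => (qpc q n * ((q ^ 2) ^ n - 1)) • W ^ n) := by
      have := hS2.sub hS
      simpa [← sub_smul, mul_sub, mul_one] using this
    rw [Summable.tsum_eq_zero_add hsum3]
    simp only [qpc_zero, pow_zero, mul_one, sub_self, mul_zero, zero_smul, zero_add]
    congr 1
    funext n
    congr 1
    have h := qpc_succ hq1 (q := q) n
    have : (q ^ 2) ^ (n + 1) = q ^ (2 * (n + 1)) := by rw [← pow_mul]
    rw [this]
    linear_combination -h
  rw [add_mul, one_mul, hmul, qPsi, ← hsub]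
  abel

lemma comm_one_add (a c : ℂ) (W : A) : Commute (1 + a • W) (1 + c • W) := by
  have hW : Commute ((a : ℂ) • W) ((c : ℂ) • W) := ((Commute.refl W).smul_left a).smul_right c
  exact ((Commute.one_left (1 + c • W))).add_left
    ((Commute.one_right (a • W)).add_right hW)

lemma qPsi_shift_up {q : ℂ} (hq1 : ‖q‖ < 1) (W : A) (hW : ‖q‖ * ‖W‖ < 1) : ∀ N : ℕ,
    qPsi q ((q ^ (2 * N) : ℂ) • W)
      = ((List.range N).map (fun m => 1 + (q ^ (2 * m + 1) : ℂ) • W)).prod * qPsi q W := by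
  intro N
  induction N with
  | zero => simp
  | succ N ih =>
    have hq0 : (0:ℝ) ≤ ‖q‖ := norm_nonneg q
    have hcond : ‖q‖ * ‖(q ^ (2 * N) : ℂ) • W‖ < 1 := by
      rw [norm_smul, norm_pow]
      calc ‖q‖ * (‖q‖ ^ (2 * N) * ‖W‖) = ‖q‖ ^ (2 * N) * (‖q‖ * ‖W‖) := by ring
        _ ≤ 1 * (‖q‖ * ‖W‖) :=
            mul_le_mul_of_nonneg_right (pow_le_one₀ hq0 hq1.le) (by positivity)
        _ < 1 := by rwa [one_mul]
    have hfun := qPsi_funEq hq1 ((q ^ (2 * N) : ℂ) • W) hcond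
    have e1 : (q : ℂ) • (q ^ (2 * N) : ℂ) • W = (q ^ (2 * N + 1) : ℂ) • W := by
      rw [smul_smul, ← pow_succ']
    have e2 : (q ^ 2 : ℂ) • (q ^ (2 * N) : ℂ) • W = (q ^ (2 * (N + 1)) : ℂ) • W := by
      rw [smul_smul, ← pow_add]
      congr 2
      omega
    rw [e1, e2] at hfun
    rw [← hfun, ih, List.range_succ, List.map_append, List.prod_append]
    simp only [List.map_cons, List.map_nil, List.prod_cons, List.prod_nil, mul_one]
    have hcomm : Commute (1 + (q ^ (2 * N + 1) : ℂ) • W)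
        (((List.range N).map (fun m => 1 + (q ^ (2 * m + 1) : ℂ) • W)).prod) := by
      apply Commute.list_prod_right
      intro x hx
      rw [List.mem_map] at hx
      obtain ⟨m, _, rfl⟩ := hx
      exact comm_one_add _ _ W
    rw [← mul_assoc, ← hcomm.eq, mul_assoc]

lemma qPsi_shift_down {q : ℂ} (hq0 : 0 < ‖q‖) (hq1 : ‖q‖ < 1) (W : A) : ∀ N : ℕ,
    ‖q‖ * ‖W‖ < ‖q‖ ^ (2 * N) →
    ((List.range N).map (fun m => 1 + ((q ^ (2 * m + 1) : ℂ))⁻¹ • W)).prod *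
      qPsi q (((q ^ (2 * N) : ℂ))⁻¹ • W) = qPsi q W := by
  have hqne : (q : ℂ) ≠ 0 := by
    intro h; rw [h, norm_zero] at hq0; exact lt_irrefl _ hq0
  intro N
  induction N with
  | zero => intro _; simp
  | succ N ih =>
    intro hN
    have hpowpos : ∀ k : ℕ, (0:ℝ) < ‖q‖ ^ k := fun k => pow_pos hq0 k
    have hcond : ‖q‖ * ‖((q ^ (2 * (N + 1)) : ℂ))⁻¹ • W‖ < 1 := by
      rw [norm_smul, norm_inv, norm_pow]
      rw [← mul_assoc, mul_comm ‖q‖ _, mul_assoc, ← div_eq_inv_mul]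
      rw [div_lt_one (hpowpos _)]
      exact hN
    have hfun := qPsi_funEq hq1 (((q ^ (2 * (N + 1)) : ℂ))⁻¹ • W) hcond
    have e1 : (q : ℂ) • ((q ^ (2 * (N + 1)) : ℂ))⁻¹ • W = ((q ^ (2 * N + 1) : ℂ))⁻¹ • W := by
      rw [smul_smul]
      congr 1
      have hsplit : (q : ℂ) ^ (2 * (N + 1)) = q ^ (2 * N + 1) * q := by
        rw [← pow_succ]
        congr 1
      rw [hsplit, mul_inv_rev, ← mul_assoc, mul_inv_cancel₀ hqne, one_mul]
    have e2 : (q ^ 2 : ℂ) • ((q ^ (2 * (N + 1)) : ℂ))⁻¹ • W = ((q ^ (2 * N) : ℂ))⁻¹ • W := by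
      rw [smul_smul]
      congr 1
      have hsplit : (q : ℂ) ^ (2 * (N + 1)) = q ^ (2 * N) * q ^ 2 := by
        rw [← pow_add]
        congr 1
      rw [hsplit, mul_inv_rev, ← mul_assoc,
        mul_inv_cancel₀ (pow_ne_zero 2 hqne), one_mul]
    rw [e1, e2] at hfun
    rw [List.range_succ, List.map_append, List.prod_append]
    simp only [List.map_cons, List.map_nil, List.prod_cons, List.prod_nil, mul_one]
    rw [mul_assoc, hfun]
    exact ih (hN.trans_le (pow_le_pow_of_le_one (norm_nonneg q) hq1.le (by omega)))
lemma qPsi_comm {q : ℂ} (hq1 : ‖q‖ < 1) (U V : A) (d : ℂ) (hd : d ≠ 0)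
    (hUV : U * V = d • (V * U)) (h1 : ‖q‖ * ‖V‖ < 1) (h2 : ‖q‖ * ‖d⁻¹ • V‖ < 1) :
    qPsi q V * U = U * qPsi q (d⁻¹ • V) := by
  have hVU : V * U = d⁻¹ • (U * V) := by
    rw [hUV, smul_smul, inv_mul_cancel₀ hd, one_smul]
  have hpow : ∀ n : ℕ, V ^ n * U = (d⁻¹) ^ n • (U * V ^ n) := by
    intro n
    induction n with
    | zero => simp
    | succ n ih =>
      calc V ^ (n + 1) * U = V ^ n * (V * U) := by rw [pow_succ, mul_assoc]
        _ = V ^ n * (d⁻¹ • (U * V)) := by rw [hVU]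
        _ = d⁻¹ • (V ^ n * U * V) := by rw [mul_smul_comm, mul_assoc]
        _ = d⁻¹ • (((d⁻¹) ^ n • (U * V ^ n)) * V) := by rw [ih]
        _ = (d⁻¹) ^ (n + 1) • (U * V ^ (n + 1)) := by
            rw [smul_mul_assoc, smul_smul, mul_assoc, ← pow_succ, ← pow_succ']
  have hS : Summable (fun n : ℕ => qpc q n • V ^ n) := qsummable hq1 V h1
  have hS2 : Summable (fun n : ℕ => (qpc q n * (d⁻¹) ^ n) • V ^ n) :=
    qsummable_smul hq1 d⁻¹ V h2
  calc qPsi q V * U = ∑' n : ℕ, (qpc q n • V ^ n) * U := (hS.tsum_mul_right U).symm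
    _ = ∑' n : ℕ, U * ((qpc q n * (d⁻¹) ^ n) • V ^ n) := by
        congr 1
        funext n
        rw [smul_mul_assoc, hpow n, smul_smul, mul_smul_comm]
    _ = U * ∑' n : ℕ, (qpc q n * (d⁻¹) ^ n) • V ^ n := hS2.tsum_mul_left U
    _ = U * qPsi q (d⁻¹ • V) := by rw [qPsi_smul]

lemma qPsi_isUnit_small {q : ℂ} (hq1 : ‖q‖ < 1) (W : A)
    (hsmall : ‖q‖ * ‖W‖ < 1 / (qC q + 1)) : IsUnit (qPsi q W) := by
  have hC1 := one_le_qC q hq1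
  set ρ := ‖q‖ * ‖W‖ with hρ
  have hρ0 : 0 ≤ ρ := by positivity
  have hρ1 : ρ < 1 := by
    have : 1 / (qC q + 1) ≤ 1 := by
      rw [div_le_one (by linarith)]; linarith
    linarith
  have hW : ‖q‖ * ‖W‖ < 1 := hρ1
  have hS : Summable (fun n : ℕ => qpc q n • W ^ n) := qsummable hq1 W hW
  have htail : ‖qPsi q W - 1‖ ≤ qC q * ρ / (1 - ρ) := by
    have hzero : qPsi q W = 1 + ∑' n : ℕ, qpc q (n + 1) • W ^ (n + 1) := by
      rw [qPsi, Summable.tsum_eq_zero_add hS]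
      simp [qpc_zero]
    rw [hzero, add_sub_cancel_left]
    have hb : ∀ n : ℕ, ‖qpc q (n + 1) • W ^ (n + 1)‖ ≤ qC q * ρ * ρ ^ n := by
      intro n
      rw [norm_smul]
      calc ‖qpc q (n+1)‖ * ‖W ^ (n+1)‖ ≤ (qC q * ‖q‖ ^ (n+1)) * ‖W‖ ^ (n+1) :=
            mul_le_mul (qpc_bound hq1 (n+1)) (norm_pow_le' W n.succ_pos)
              (norm_nonneg _) (by positivity)
        _ = qC q * ρ * ρ ^ n := by rw [hρ]; ring
    have hsum : Summable (fun n : ℕ => qC q * ρ * ρ ^ n) :=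
      (summable_geometric_of_lt_one hρ0 hρ1).mul_left _
    have hSnorm : Summable (fun n : ℕ => ‖qpc q (n + 1) • W ^ (n + 1)‖) :=
      Summable.of_nonneg_of_le (fun n => norm_nonneg _) hb hsum
    calc ‖∑' n : ℕ, qpc q (n + 1) • W ^ (n + 1)‖
        ≤ ∑' n : ℕ, ‖qpc q (n + 1) • W ^ (n + 1)‖ := norm_tsum_le_tsum_norm hSnorm
      _ ≤ ∑' n : ℕ, qC q * ρ * ρ ^ n := Summable.tsum_le_tsum hb hSnorm hsum
      _ = qC q * ρ * (1 - ρ)⁻¹ := by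
          rw [tsum_mul_left, tsum_geometric_of_lt_one hρ0 hρ1]
      _ = qC q * ρ / (1 - ρ) := by rw [div_eq_mul_inv]
  have hlt : ‖qPsi q W - 1‖ < 1 := by
    apply lt_of_le_of_lt htail
    rw [div_lt_one (by linarith)]
    have : ρ * (qC q + 1) < 1 := by
      have := hsmall
      rw [lt_div_iff₀ (by linarith)] at this
      linarith
    nlinarith
  have h1 : ‖(1 : A) - qPsi q W‖ < 1 := by rwa [norm_sub_rev]
  exact ⟨Units.oneSub ((1 : A) - qPsi q W) h1, by simp [Units.oneSub]⟩

lemma prod_ring_inverse (l : List A) (hu : ∀ x ∈ l, IsUnit x)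
    (hc : ∀ x ∈ l, ∀ y ∈ l, Commute x y) :
    Ring.inverse l.prod = (l.map Ring.inverse).prod := by
  induction l with
  | nil => simp
  | cons a t ih =>
    have hau : IsUnit a := hu a (List.mem_cons_self)
    have hcomm : Commute a t.prod :=
      Commute.list_prod_right _ _ fun x hx =>
        hc a (List.mem_cons_self) x (List.mem_cons_of_mem a hx)
    rw [List.prod_cons, Ring.mul_inverse_rev' hcomm, List.map_cons, List.prod_cons]
    rw [ih (fun x hx => hu x (List.mem_cons_of_mem a hx))
      (fun x hx y hy => hc x (List.mem_cons_of_mem a hx) y (List.mem_cons_of_mem a hy))]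
    have hcomm2 : Commute (Ring.inverse a) ((t.map Ring.inverse).prod) := by
      apply Commute.list_prod_right
      intro x hx
      rw [List.mem_map] at hx
      obtain ⟨y, hy, rfl⟩ := hx
      have hyu := hu y (List.mem_cons_of_mem a hy)
      have h := hc a (List.mem_cons_self) y (List.mem_cons_of_mem a hy)
      rw [← hau.unit_spec, ← hyu.unit_spec] at h
      rw [← hau.unit_spec, ← hyu.unit_spec, Ring.inverse_unit, Ring.inverse_unit]
      exact h.units_inv_left.units_inv_right
    rw [hcomm2.eq]

lemma isUnit_one_add_smul {c : ℂ} (V : A) (h : ‖c • V‖ < 1) : IsUnit (1 + c • V) := by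
  have h1 : ‖-(c • V)‖ < 1 := by rwa [norm_neg]
  refine ⟨Units.oneSub (-(c • V)) h1, ?_⟩
  show 1 - (-(c • V)) = 1 + c • V
  rw [sub_neg_eq_add]
lemma qPsi_isUnit {q : ℂ} (hq0 : 0 < ‖q‖) (hq1 : ‖q‖ < 1) (V : A)
    (hqV : ‖q‖ * ‖V‖ < 1) (hV1 : ‖V‖ < 1) : IsUnit (qPsi q V) := by
  have hC1 := one_le_qC q hq1
  obtain ⟨N, hN⟩ := exists_pow_lt_of_lt_one
    (x := (1 / (qC q + 1)) / (‖V‖ + 1)) (by positivity) hq1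
  have hsmall : ‖q‖ * ‖(q ^ (2 * N) : ℂ) • V‖ < 1 / (qC q + 1) := by
    rw [norm_smul, norm_pow]
    have h1 : ‖q‖ * (‖q‖ ^ (2 * N) * ‖V‖) = ‖q‖ ^ (2 * N + 1) * ‖V‖ := by
      rw [pow_succ]; ring
    rw [h1]
    have h2 : ‖q‖ ^ (2 * N + 1) ≤ ‖q‖ ^ N :=
      pow_le_pow_of_le_one (norm_nonneg q) hq1.le (by omega)
    have h3 : ‖q‖ ^ (2 * N + 1) * ‖V‖ ≤ ‖q‖ ^ N * (‖V‖ + 1) := by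
      have := norm_nonneg V
      nlinarith [pow_nonneg (norm_nonneg q) (2 * N + 1)]
    calc ‖q‖ ^ (2 * N + 1) * ‖V‖ ≤ ‖q‖ ^ N * (‖V‖ + 1) := h3
      _ < ((1 / (qC q + 1)) / (‖V‖ + 1)) * (‖V‖ + 1) := by
          apply mul_lt_mul_of_pos_right hN
          nlinarith [norm_nonneg V]
      _ = 1 / (qC q + 1) := by
          field_simp
  have hu2 : IsUnit (qPsi q ((q ^ (2 * N) : ℂ) • V)) := qPsi_isUnit_small hq1 _ hsmall
  rw [qPsi_shift_up hq1 V hqV N] at hu2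
  have hP : IsUnit (((List.range N).map (fun m => 1 + (q ^ (2 * m + 1) : ℂ) • V)).prod) := by
    apply List.prod_isUnit
    intro x hx
    rw [List.mem_map] at hx
    obtain ⟨m, _, rfl⟩ := hx
    apply isUnit_one_add_smul
    rw [norm_smul, norm_pow]
    calc ‖q‖ ^ (2 * m + 1) * ‖V‖ ≤ 1 * ‖V‖ :=
        mul_le_mul_of_nonneg_right (pow_le_one₀ (norm_nonneg q) hq1.le) (norm_nonneg V)
      _ < 1 := by rwa [one_mul]
  obtain ⟨u, hu⟩ := hP
  have : qPsi q V = ↑u⁻¹ * (↑u * qPsi q V) := by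
    rw [← mul_assoc]
    simp
  rw [this]
  apply IsUnit.mul (Units.isUnit _)
  rwa [hu]
end alg


lemma quantumPsiB_eq_qPsi {A : Type*} [NormedRing A] [NormedAlgebra ℂ A]
    (q : ℂ) (W : A) : quantumPsiB q W = qPsi q W := rfl

lemma flatMap_coe_eq_map (l : List ℕ) :
    (l.flatMap fun a => [((a : ℕ) : ℤ)]) = l.map (fun a : ℕ => ((a : ℕ) : ℤ)) := by
  induction l with
  | nil => rfl
  | cons a t ih => rw [List.flatMap_cons, List.map_cons, ih]; rfl


/-- Adjoint action of the quantum dilogarithm: if `UV = q^{2b} VU` with `b ≠ 0`,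
`s = sgn b`, and `‖V‖ < |q|^{2|b|}`, then `Ψ_q(V)` is invertible, each factor
`1 + q^{-s(2m-1)} V` is invertible, and
`Ψ_q(V) U Ψ_q(V)⁻¹ = U ∏_{m=1}^{|b|} (1 + q^{-s(2m-1)} V)^{-s}`.
(The factors of the product pairwise commute, so it is written as an ordered
product over `m = 1, …, |b|`.) -/
theorem quantumPsiB_adjoint_action {A : Type*} [NormedRing A] [NormedAlgebra ℂ A]
    [CompleteSpace A] (q : ℂ) (hq0 : 0 < ‖q‖) (hq1 : ‖q‖ < 1) (b : ℤ) (hb : b ≠ 0)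
    (U V : A) (hUV : U * V = (q ^ (2 * b)) • (V * U))
    (hV : ‖V‖ < ‖q‖ ^ (2 * b.natAbs)) :
    IsUnit (quantumPsiB q V) ∧
    (∀ m : ℕ, 1 ≤ m → m ≤ b.natAbs →
      IsUnit (1 + (q ^ (-b.sign * (2 * (m : ℤ) - 1))) • V)) ∧
    quantumPsiB q V * U * Ring.inverse (quantumPsiB q V) =
      U * ((List.range b.natAbs).map (fun m =>
        if 0 < b then Ring.inverse (1 + (q ^ (-b.sign * (2 * ((m : ℤ) + 1) - 1))) • V)
        else 1 + (q ^ (-b.sign * (2 * ((m : ℤ) + 1) - 1))) • V)).prod := by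
  have hqne : q ≠ 0 := by
    intro h; rw [h, norm_zero] at hq0; exact lt_irrefl _ hq0
  set N := b.natAbs with hNdef
  have hN0 : 0 < N := Int.natAbs_pos.2 hb
  have hrq0 : (0:ℝ) ≤ ‖q‖ := norm_nonneg q
  have hV1 : ‖V‖ < 1 := hV.trans_le (pow_le_one₀ hrq0 hq1.le)
  have hqV : ‖q‖ * ‖V‖ < 1 :=
    lt_of_le_of_lt (mul_le_of_le_one_left (norm_nonneg V) hq1.le) hV1
  have huΨ : IsUnit (qPsi q V) := qPsi_isUnit hq0 hq1 V hqV hV1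
  simp only [quantumPsiB_eq_qPsi]
  refine ⟨huΨ, ?_, ?_⟩
  · -- invertibility of each factor
    intro m h1m hmN
    rcases hb.lt_or_gt with hbneg | hbpos
    · have hsign : b.sign = -1 := Int.sign_eq_neg_one_iff_neg.2 hbneg
      have hexp : -b.sign * (2 * (m : ℤ) - 1) = ((2 * m - 1 : ℕ) : ℤ) := by
        rw [hsign]; push_cast; omega
      rw [hexp, zpow_natCast]
      apply isUnit_one_add_smul
      rw [norm_smul, norm_pow]
      calc ‖q‖ ^ (2 * m - 1) * ‖V‖ ≤ 1 * ‖V‖ :=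
          mul_le_mul_of_nonneg_right (pow_le_one₀ hrq0 hq1.le) (norm_nonneg V)
        _ < 1 := by rwa [one_mul]
    · have hsign : b.sign = 1 := Int.sign_eq_one_iff_pos.2 hbpos
      have hexp : -b.sign * (2 * (m : ℤ) - 1) = -((2 * m - 1 : ℕ) : ℤ) := by
        rw [hsign]; push_cast; omega
      rw [hexp, zpow_neg, zpow_natCast]
      apply isUnit_one_add_smul
      rw [norm_smul, norm_inv, norm_pow, ← div_eq_inv_mul, div_lt_one (pow_pos hq0 _)]
      calc ‖V‖ < ‖q‖ ^ (2 * N) := hV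
        _ ≤ ‖q‖ ^ (2 * m - 1) := pow_le_pow_of_le_one hrq0 hq1.le (by omega)
  · -- the main identity
    rcases hb.lt_or_gt with hbneg | hbpos
    · -- b < 0: product of (1 + q^{2m+1} V)
      have hsign : b.sign = -1 := Int.sign_eq_neg_one_iff_neg.2 hbneg
      have hbN : (b : ℤ) = -(N : ℤ) := by omega
      have hd_eq : (q ^ (2 * b) : ℂ)⁻¹ = q ^ (2 * N) := by
        rw [show (2 * b : ℤ) = -((2 * N : ℕ) : ℤ) by omega, zpow_neg, zpow_natCast, inv_inv]
      have hd : (q ^ (2 * b) : ℂ) ≠ 0 := zpow_ne_zero _ hqne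
      have h2 : ‖q‖ * ‖(q ^ (2 * b) : ℂ)⁻¹ • V‖ < 1 := by
        rw [hd_eq, norm_smul, norm_pow]
        calc ‖q‖ * (‖q‖ ^ (2 * N) * ‖V‖) ≤ 1 * (1 * ‖V‖) := by
              apply mul_le_mul hq1.le _ (by positivity) (by norm_num)
              exact mul_le_mul_of_nonneg_right (pow_le_one₀ hrq0 hq1.le) (norm_nonneg V)
          _ < 1 := by rw [one_mul, one_mul]; exact hV1
      have hcomm := qPsi_comm hq1 U V _ hd hUV hqV h2
      rw [hd_eq] at hcomm
      have hup := qPsi_shift_up hq1 V hqV N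
      rw [hcomm, hup, mul_assoc, mul_assoc, Ring.mul_inverse_cancel _ huΨ, mul_one]
      congr 1
      have hlist : ((List.range N).map (fun m =>
          if 0 < b then Ring.inverse (1 + (q ^ (-b.sign * (2 * ((m : ℤ) + 1) - 1))) • V)
          else 1 + (q ^ (-b.sign * (2 * ((m : ℤ) + 1) - 1))) • V))
          = (List.range N).map (fun m : ℕ => 1 + (q ^ (2 * m + 1) : ℂ) • V) := by
        show (List.map _ ((List.range N).flatMap fun a => [((a : ℕ) : ℤ)])) = _
        rw [flatMap_coe_eq_map, List.map_map]
        apply List.map_congr_left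
        intro m _
        simp only [Function.comp_apply]
        rw [if_neg (by omega : ¬ 0 < b)]
        have harg : (-b.sign * (2 * (((m : ℕ) : ℤ) + 1) - 1)) = ((2 * m + 1 : ℕ) : ℤ) := by
          rw [hsign]; push_cast; ring
        rw [harg, zpow_natCast]
      rw [hlist]
    · -- b > 0 : product of inverses
      have hsign : b.sign = 1 := Int.sign_eq_one_iff_pos.2 hbpos
      have hbN : (b : ℤ) = (N : ℤ) := by omega
      have hd_eq : (q ^ (2 * b) : ℂ)⁻¹ = (q ^ (2 * N) : ℂ)⁻¹ := by
        rw [show (2 * b : ℤ) = ((2 * N : ℕ) : ℤ) by omega, zpow_natCast]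
      have hd : (q ^ (2 * b) : ℂ) ≠ 0 := zpow_ne_zero _ hqne
      have key : ‖q‖ * ‖V‖ < ‖q‖ ^ (2 * N) :=
        lt_of_le_of_lt (mul_le_of_le_one_left (norm_nonneg V) hq1.le) hV
      have h2 : ‖q‖ * ‖(q ^ (2 * b) : ℂ)⁻¹ • V‖ < 1 := by
        rw [hd_eq, norm_smul, norm_inv, norm_pow]
        rw [show ‖q‖ * ((‖q‖ ^ (2 * N))⁻¹ * ‖V‖) = (‖q‖ * ‖V‖) / ‖q‖ ^ (2 * N) by ring]
        exact (div_lt_one (pow_pos hq0 _)).2 key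
      have hcomm := qPsi_comm hq1 U V _ hd hUV hqV h2
      rw [hd_eq] at hcomm
      have hdown := qPsi_shift_down hq0 hq1 V N key
      have hfacu : ∀ x ∈ (List.range N).map (fun m => 1 + ((q ^ (2 * m + 1) : ℂ))⁻¹ • V),
          IsUnit x := by
        intro x hx
        rw [List.mem_map] at hx
        obtain ⟨m, hm, rfl⟩ := hx
        rw [List.mem_range] at hm
        apply isUnit_one_add_smul
        rw [norm_smul, norm_inv, norm_pow, ← div_eq_inv_mul, div_lt_one (pow_pos hq0 _)]
        calc ‖V‖ < ‖q‖ ^ (2 * N) := hV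
          _ ≤ ‖q‖ ^ (2 * m + 1) := pow_le_pow_of_le_one hrq0 hq1.le (by omega)
      set P := ((List.range N).map (fun m => 1 + ((q ^ (2 * m + 1) : ℂ))⁻¹ • V)).prod with hPdef
      have hPu : IsUnit P := List.prod_isUnit hfacu
      have hinvP : qPsi q (((q ^ (2 * N) : ℂ))⁻¹ • V) = Ring.inverse P * qPsi q V := by
        rw [← hdown, ← mul_assoc, Ring.inverse_mul_cancel _ hPu, one_mul]
      rw [hcomm, hinvP, show U * (Ring.inverse P * qPsi q V) = U * Ring.inverse P * qPsi q V
        from (mul_assoc _ _ _).symm, mul_assoc (U * Ring.inverse P),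
        Ring.mul_inverse_cancel _ huΨ, mul_one]
      have hcinv : Ring.inverse P
          = ((List.range N).map (fun m => Ring.inverse (1 + ((q ^ (2 * m + 1) : ℂ))⁻¹ • V))).prod := by
        rw [hPdef, prod_ring_inverse _ hfacu, List.map_map]
        · rfl
        · intro x hx y hy
          rw [List.mem_map] at hx hy
          obtain ⟨mx, _, rfl⟩ := hx
          obtain ⟨my, _, rfl⟩ := hy
          exact comm_one_add _ _ V
      rw [hcinv]
      congr 1
      have hlist : ((List.range N).map (fun m =>
          if 0 < b then Ring.inverse (1 + (q ^ (-b.sign * (2 * ((m : ℤ) + 1) - 1))) • V)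
          else 1 + (q ^ (-b.sign * (2 * ((m : ℤ) + 1) - 1))) • V))
          = (List.range N).map (fun m : ℕ => Ring.inverse (1 + ((q ^ (2 * m + 1) : ℂ))⁻¹ • V)) := by
        show (List.map _ ((List.range N).flatMap fun a => [((a : ℕ) : ℤ)])) = _
        rw [flatMap_coe_eq_map, List.map_map]
        apply List.map_congr_left
        intro m _
        simp only [Function.comp_apply]
        rw [if_pos hbpos]
        have harg : (-b.sign * (2 * (((m : ℕ) : ℤ) + 1) - 1)) = -((2 * m + 1 : ℕ) : ℤ) := by
          rw [hsign]; push_cast; ring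
        rw [harg, zpow_neg, zpow_natCast]
      rw [hlist]
end
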